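/- arXiv:2001.04243 — 2 statements merged into one kernel-verified Lean document; each statement's English description precedes it below -/
import Mathlib

section
/- Let K ≥ 2, Y = {1,...,K}, fix 1 ≤ c ≤ K−1, q : Y → ℝ nonnegative, p̄(S) = (1/C(K−1,c)) · Σ_{y∉S} q(y), and ℓ : Y → ℝ arbitrary. Let L = Σ_{y∈Y} ℓ(y) and let γ ∈ [0,1]. Then Σ_{y∈Y} ℓ(y)·q(y) = Σ_{S:|S|=c} [ (1−γ)·L − ((K−1)/c)·Σ_{y∈S} ℓ(y) ]·p̄(S) + γ·L·(Σ_{y∈Y} q(y)). -/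
open Finset

lemma pc1 {K c : ℕ} (z : Fin K) :
    ((univ : Finset (Fin K)).powersetCard c).filter (fun S => z ∉ S)
      = ((univ : Finset (Fin K)).erase z).powersetCard c := by
  ext S
  simp only [mem_filter, Finset.mem_powersetCard, Finset.subset_erase]
  tauto

lemma cnt1 {K c : ℕ} (z : Fin K) :
    (((univ : Finset (Fin K)).powersetCard c).filter (fun S => z ∉ S)).card = (K-1).choose c := by
  rw [pc1, Finset.card_powersetCard, Finset.card_erase_of_mem (mem_univ z), card_univ, Fintype.card_fin]

lemma pc2 {K c : ℕ} (y z : Fin K) :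
    ((univ : Finset (Fin K)).powersetCard c).filter (fun S => y ∉ S ∧ z ∉ S)
      = ((((univ : Finset (Fin K)).erase y)).erase z).powersetCard c := by
  ext S
  simp only [mem_filter, Finset.mem_powersetCard, Finset.subset_erase]
  tauto

lemma cnt2 {K c : ℕ} (y z : Fin K) (h : y ≠ z) :
    (((univ : Finset (Fin K)).powersetCard c).filter (fun S => y ∉ S ∧ z ∉ S)).card = (K-2).choose c := by
  rw [pc2, Finset.card_powersetCard, Finset.card_erase_of_mem (by simp [h.symm]),
    Finset.card_erase_of_mem (mem_univ y), card_univ, Fintype.card_fin,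
    show K - 1 - 1 = K - 2 from by omega]

lemma complsum {K : ℕ} (S : Finset (Fin K)) (f : Fin K → ℝ) :
    ∑ z ∈ Sᶜ, f z = ∑ z, if z ∉ S then f z else 0 := by
  rw [Finset.sum_ite, Finset.sum_const_zero, add_zero]
  apply Finset.sum_congr _ (fun _ _ => rfl)
  ext x; simp

lemma T1lem {K c : ℕ} (q : Fin K → ℝ) :
    ∑ S ∈ (univ : Finset (Fin K)).powersetCard c, ∑ z ∈ Sᶜ, q z
      = ((K-1).choose c : ℝ) * ∑ z, q z := by
  simp_rw [complsum]
  rw [Finset.sum_comm, Finset.mul_sum]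
  refine Finset.sum_congr rfl fun z _ => ?_
  rw [← Finset.sum_filter, Finset.sum_const, cnt1, nsmul_eq_mul]

lemma T2lem {K c : ℕ} (ℓ q : Fin K → ℝ) :
    ∑ S ∈ (univ : Finset (Fin K)).powersetCard c, (∑ y ∈ Sᶜ, ℓ y) * (∑ z ∈ Sᶜ, q z)
      = ((K-2).choose c : ℝ) * ((∑ y, ℓ y) * (∑ z, q z) - ∑ y, ℓ y * q y)
        + ((K-1).choose c : ℝ) * ∑ y, ℓ y * q y := by
  have h : ∀ S : Finset (Fin K), (∑ y ∈ Sᶜ, ℓ y) * (∑ z ∈ Sᶜ, q z)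
      = ∑ y, ∑ z, if y ∉ S ∧ z ∉ S then ℓ y * q z else 0 := by
    intro S
    rw [complsum, complsum, Finset.sum_mul_sum]
    refine Finset.sum_congr rfl fun y _ => Finset.sum_congr rfl fun z _ => ?_
    rw [ite_zero_mul_ite_zero]
  simp_rw [h]
  rw [Finset.sum_comm]
  have step : ∀ y : Fin K, ∑ S ∈ (univ : Finset (Fin K)).powersetCard c,
      ∑ z, (if y ∉ S ∧ z ∉ S then ℓ y * q z else 0)
      = ∑ z, (if y = z then (((K-1).choose c : ℝ)) else ((K-2).choose c : ℝ)) * (ℓ y * q z) := by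
    intro y
    rw [Finset.sum_comm]
    refine Finset.sum_congr rfl fun z _ => ?_
    rw [← Finset.sum_filter, Finset.sum_const, nsmul_eq_mul]
    by_cases hyz : y = z
    · subst hyz
      rw [if_pos rfl]
      congr 2
      simp only [and_self]
      exact cnt1 y
    · rw [cnt2 y z hyz, if_neg hyz]
  simp_rw [step]
  have expand : ∀ y z : Fin K, (if y = z then (((K-1).choose c : ℝ)) else ((K-2).choose c : ℝ)) * (ℓ y * q z)
      = ((K-2).choose c : ℝ) * (ℓ y * q z) + (if y = z then (((K-1).choose c : ℝ) - ((K-2).choose c : ℝ)) * (ℓ y * q z) else 0) := by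
    intro y z; split_ifs <;> ring
  simp_rw [expand, Finset.sum_add_distrib, Finset.sum_ite_eq, if_pos (mem_univ _)]
  have hdouble : (∑ x : Fin K, ∑ x1 : Fin K, ((K-2).choose c:ℝ) * (ℓ x * q x1))
      = ((K-2).choose c:ℝ) * ((∑ y, ℓ y) * (∑ z, q z)) := by
    rw [Finset.sum_mul_sum, Finset.mul_sum]
    exact Finset.sum_congr rfl fun x _ => by rw [Finset.mul_sum]
  rw [hdouble, ← Finset.mul_sum]
  ring


theorem stmt_6 (K : ℕ) (hK : 2 ≤ K) (c : ℕ) (hc1 : 1 ≤ c) (hc2 : c ≤ K - 1)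
    (q : Fin K → ℝ) (hq : ∀ y, 0 ≤ q y) (ℓ : Fin K → ℝ)
    (γ : ℝ) (hγ0 : 0 ≤ γ) (hγ1 : γ ≤ 1) :
    (∑ y, ℓ y * q y)
      = (∑ S ∈ Finset.univ.powersetCard c,
          ((1 - γ) * (∑ y, ℓ y) - (((K : ℝ) - 1) / (c : ℝ)) * ∑ y ∈ S, ℓ y) *
            ((((K - 1).choose c : ℝ))⁻¹ * ∑ z ∈ Sᶜ, q z))
        + γ * (∑ y, ℓ y) * (∑ y, q y) := by
  have hNne : ((K-1).choose c : ℝ) ≠ 0 := by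
    exact_mod_cast (Nat.choose_pos hc2).ne'
  have hcne : (c:ℝ) ≠ 0 := by positivity
  have hrec : (K-1).choose c = (K-2).choose (c-1) + (K-2).choose c := by
    rw [show K - 1 = (K-2) + 1 from by omega, show c = (c-1) + 1 from by omega]
    rw [Nat.choose_succ_succ]
    congr 1 <;> congr 1 <;> omega
  have hmul : (K-1) * (K-2).choose (c-1) = c * (K-1).choose c := by
    have := Nat.add_one_mul_choose_eq (K-2) (c-1)
    rw [show K - 2 + 1 = K - 1 from by omega, show c - 1 + 1 = c from by omega] at this
    rw [this]; ring
  have keyR : ((K:ℝ) - 1) * ((((K-1).choose c:ℝ)) - ((K-2).choose c:ℝ)) = (c:ℝ) * ((K-1).choose c:ℝ) := by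
    have h1 : ((K-1).choose c : ℝ) - ((K-2).choose c:ℝ) = ((K-2).choose (c-1) : ℝ) := by
      rw [hrec]; push_cast; ring
    have h2 : ((K:ℝ) - 1) = ((K-1 : ℕ) : ℝ) := by
      have : (1:ℕ) ≤ K := by omega
      push_cast [Nat.cast_sub this]; ring
    rw [h1, h2]
    exact_mod_cast hmul
  set L := ∑ y, ℓ y with hL
  have hsummand : ∀ S ∈ (univ : Finset (Fin K)).powersetCard c,
      ((1 - γ) * L - (((K : ℝ) - 1) / (c : ℝ)) * ∑ y ∈ S, ℓ y) *
            ((((K - 1).choose c : ℝ))⁻¹ * ∑ z ∈ Sᶜ, q z)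
      = (((1 - γ) - ((K:ℝ)-1)/(c:ℝ)) * L * (((K - 1).choose c : ℝ))⁻¹) * (∑ z ∈ Sᶜ, q z)
        + ((((K:ℝ)-1)/(c:ℝ)) * (((K - 1).choose c : ℝ))⁻¹) * ((∑ y ∈ Sᶜ, ℓ y) * (∑ z ∈ Sᶜ, q z)) := by
    intro S _
    have : ∑ y ∈ S, ℓ y = L - ∑ y ∈ Sᶜ, ℓ y := by
      rw [eq_sub_iff_add_eq, Finset.sum_add_sum_compl]
    rw [this]; ring
  rw [Finset.sum_congr rfl hsummand, Finset.sum_add_distrib, ← Finset.mul_sum, ← Finset.mul_sum,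
    T1lem, T2lem]
  set Q := ∑ y, q y
  set A := ∑ y, ℓ y * q y
  set N := ((K-1).choose c : ℝ)
  set M := ((K-2).choose c : ℝ)
  field_simp
  ring_nf
  linear_combination (L*Q - A) * keyR
end

section
/- Let K ≥ 2, Y = {1,...,K}, q : Y → ℝ nonnegative with p̄(S) = π_{|S|}·(1/C(K−1,|S|))·Σ_{y∉S} q(y), priors π_c as above with Σ_c c·π_c > 0, λ = (K−1)/(Σ_c c·π_c), γ ∈ [0,1], ℓ : Y → ℝ arbitrary, and L = Σ_{y∈Y} ℓ(y). Then Σ_{y∈Y} ℓ(y)·q(y) = Σ_{S:1≤|S|≤K−1} [ (1−γ)·L − λ·Σ_{y∈S} ℓ(y) ]·p̄(S) + γ·L·(Σ_{y∈Y} q(y)). -/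
open Finset

lemma count1 {K : ℕ} (c : ℕ) (z : Fin K) :
    (((Finset.univ : Finset (Fin K)).powersetCard c).filter (fun S => z ∉ S)).card
      = (K - 1).choose c := by
  have h : (((Finset.univ : Finset (Fin K)).powersetCard c).filter (fun S => z ∉ S))
      = (Finset.univ.erase z).powersetCard c := by
    ext S
    simp only [Finset.mem_filter, Finset.mem_powersetCard, Finset.subset_erase,
      Finset.subset_univ, true_and]
    tauto
  rw [h, Finset.card_powersetCard, Finset.card_erase_of_mem (Finset.mem_univ z),
    Finset.card_univ, Fintype.card_fin]

lemma count2 {K : ℕ} (c : ℕ) (hc : 1 ≤ c) (y z : Fin K) (hyz : y ≠ z) :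
    (((Finset.univ : Finset (Fin K)).powersetCard c).filter (fun S => y ∈ S ∧ z ∉ S)).card
      = (K - 2).choose (c - 1) := by
  have hcard : ((((Finset.univ : Finset (Fin K)).erase z).erase y).powersetCard (c-1)).card
      = (K-2).choose (c-1) := by
    rw [Finset.card_powersetCard,
      Finset.card_erase_of_mem (Finset.mem_erase.2 ⟨hyz, Finset.mem_univ y⟩),
      Finset.card_erase_of_mem (Finset.mem_univ z), Finset.card_univ, Fintype.card_fin]
    congr 1
  rw [← hcard]
  refine Finset.card_bij' (fun S _ => S.erase y) (fun T _ => insert y T) ?_ ?_ ?_ ?_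
  · intro S hS
    simp only [Finset.mem_filter, Finset.mem_powersetCard] at hS
    obtain ⟨⟨_, hScard⟩, hyS, hzS⟩ := hS
    rw [Finset.mem_powersetCard]
    constructor
    · intro w hw
      rcases Finset.mem_erase.1 hw with ⟨hwy, hwS⟩
      exact Finset.mem_erase.2 ⟨hwy, Finset.mem_erase.2 ⟨fun h => hzS (h ▸ hwS), Finset.mem_univ w⟩⟩
    · rw [Finset.card_erase_of_mem hyS, hScard]
  · intro T hT
    rw [Finset.mem_powersetCard] at hT
    obtain ⟨hTsub, hTcard⟩ := hT
    have hyT : y ∉ T := fun h => (Finset.mem_erase.1 (hTsub h)).1 rfl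
    have hzT : z ∉ T := fun h => (Finset.mem_erase.1 (Finset.mem_erase.1 (hTsub h)).2).1 rfl
    simp only [Finset.mem_filter, Finset.mem_powersetCard, Finset.subset_univ, true_and]
    refine ⟨?_, Finset.mem_insert_self y T, ?_⟩
    · rw [Finset.card_insert_of_notMem hyT, hTcard]
      omega
    · simp only [Finset.mem_insert, not_or]
      exact ⟨fun h => hyz h.symm, hzT⟩
  · intro S hS
    simp only [Finset.mem_filter] at hS
    exact Finset.insert_erase hS.2.1
  · intro T hT
    rw [Finset.mem_powersetCard] at hT
    have hyT : y ∉ T := fun h => (Finset.mem_erase.1 (hT.1 h)).1 rfl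
    exact Finset.erase_insert hyT

lemma sumA {K : ℕ} (c : ℕ) (q : Fin K → ℝ) :
    ∑ S ∈ (Finset.univ : Finset (Fin K)).powersetCard c, ∑ z ∈ Sᶜ, q z
      = ((K - 1).choose c : ℝ) * ∑ z, q z := by
  calc ∑ S ∈ (Finset.univ : Finset (Fin K)).powersetCard c, ∑ z ∈ Sᶜ, q z
      = ∑ S ∈ (Finset.univ : Finset (Fin K)).powersetCard c, ∑ z, if z ∉ S then q z else 0 := by
        refine Finset.sum_congr rfl fun S _ => ?_
        have h : Sᶜ = Finset.univ.filter (fun z => z ∉ S) := by ext z; simp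
        rw [h, Finset.sum_filter]
    _ = ∑ z, ∑ S ∈ (Finset.univ : Finset (Fin K)).powersetCard c, if z ∉ S then q z else 0 :=
        Finset.sum_comm
    _ = ∑ z : Fin K, ((K-1).choose c : ℝ) * q z := by
        refine Finset.sum_congr rfl fun z _ => ?_
        rw [← Finset.sum_filter, Finset.sum_const, count1, nsmul_eq_mul]
    _ = ((K - 1).choose c : ℝ) * ∑ z, q z := by rw [Finset.mul_sum]

lemma sumB {K : ℕ} (c : ℕ) (hc : 1 ≤ c) (ℓ q : Fin K → ℝ) :
    ∑ S ∈ (Finset.univ : Finset (Fin K)).powersetCard c, (∑ y ∈ S, ℓ y) * (∑ z ∈ Sᶜ, q z)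
      = ((K - 2).choose (c - 1) : ℝ) * ((∑ y, ℓ y) * (∑ z, q z) - ∑ y, ℓ y * q y) := by
  set C : ℝ := ((K - 2).choose (c - 1) : ℝ) with hC
  have expand : ∀ S : Finset (Fin K), (∑ y ∈ S, ℓ y) * (∑ z ∈ Sᶜ, q z)
      = ∑ y, ∑ z, if y ∈ S ∧ z ∉ S then ℓ y * q z else 0 := by
    intro S
    have h1 : (∑ y ∈ S, ℓ y) = ∑ y, if y ∈ S then ℓ y else 0 := by
      rw [Finset.sum_ite_mem, Finset.univ_inter]
    have h2 : (∑ z ∈ Sᶜ, q z) = ∑ z, if z ∉ S then q z else 0 := by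
      have h : Sᶜ = Finset.univ.filter (fun z => z ∉ S) := by ext z; simp
      rw [h, Finset.sum_filter]
    rw [h1, h2, Finset.sum_mul_sum]
    refine Finset.sum_congr rfl fun y _ => Finset.sum_congr rfl fun z _ => ?_
    by_cases hy : y ∈ S <;> by_cases hz : z ∈ S <;> simp [hy, hz]
  calc ∑ S ∈ (Finset.univ : Finset (Fin K)).powersetCard c, (∑ y ∈ S, ℓ y) * (∑ z ∈ Sᶜ, q z)
      = ∑ S ∈ (Finset.univ : Finset (Fin K)).powersetCard c,
          ∑ y, ∑ z, if y ∈ S ∧ z ∉ S then ℓ y * q z else 0 :=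
        Finset.sum_congr rfl fun S _ => expand S
    _ = ∑ y, ∑ z, ∑ S ∈ (Finset.univ : Finset (Fin K)).powersetCard c,
          if y ∈ S ∧ z ∉ S then ℓ y * q z else 0 := by
        rw [Finset.sum_comm]
        exact Finset.sum_congr rfl fun y _ => Finset.sum_comm
    _ = ∑ y, ∑ z, (if y = z then 0 else C * (ℓ y * q z)) := by
        refine Finset.sum_congr rfl fun y _ => Finset.sum_congr rfl fun z _ => ?_
        rw [← Finset.sum_filter, Finset.sum_const]
        by_cases hyz : y = z
        · subst hyz
          rw [if_pos rfl, Finset.filter_false_of_mem (fun S _ h => h.2 h.1),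
            Finset.card_empty, zero_smul]
        · rw [count2 c hc y z hyz, if_neg hyz, nsmul_eq_mul, hC]
    _ = ∑ y, (C * (ℓ y * ∑ z, q z) - C * (ℓ y * q y)) := by
        refine Finset.sum_congr rfl fun y _ => ?_
        have h : ∀ z : Fin K, (if y = z then 0 else C * (ℓ y * q z))
            = C * (ℓ y * q z) - (if y = z then C * (ℓ y * q z) else 0) := by
          intro z; split_ifs <;> ring
        rw [Finset.sum_congr rfl (fun z _ => h z), Finset.sum_sub_distrib,
          Finset.sum_ite_eq, if_pos (Finset.mem_univ y)]
        congr 1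
        rw [← Finset.mul_sum, ← Finset.mul_sum]
    _ = C * ((∑ y, ℓ y) * (∑ z, q z) - ∑ y, ℓ y * q y) := by
        rw [Finset.sum_sub_distrib, ← Finset.mul_sum, ← Finset.mul_sum, ← mul_sub,
          ← Finset.sum_mul]

lemma decomp {K : ℕ} (f : Finset (Fin K) → ℝ) :
    ∑ S ∈ Finset.univ.powerset.filter
        (fun S : Finset (Fin K) => 1 ≤ S.card ∧ S.card ≤ K - 1), f S
      = ∑ c ∈ Finset.Icc 1 (K - 1), ∑ S ∈ (Finset.univ : Finset (Fin K)).powersetCard c, f S := by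
  rw [← Finset.sum_biUnion]
  · congr 1
    ext S
    simp only [Finset.mem_biUnion, Finset.mem_Icc, Finset.mem_powersetCard, Finset.mem_filter,
      Finset.mem_powerset, Finset.subset_univ, true_and]
    exact ⟨fun h => ⟨S.card, h, rfl⟩, fun ⟨a, ha, h⟩ => h ▸ ha⟩
  · intro a _ b _ hab
    rw [Function.onFun, Finset.disjoint_left]
    intro S hSa hSb
    rw [Finset.mem_powersetCard] at hSa hSb
    exact hab (hSa.2 ▸ hSb.2 ▸ rfl)

theorem stmt_11 (K : ℕ) (hK : 2 ≤ K) (q : Fin K → ℝ) (hq : ∀ y, 0 ≤ q y)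
    (π : ℕ → ℝ) (hπ : ∀ c ∈ Finset.Icc 1 (K - 1), 0 ≤ π c)
    (hπsum : ∑ c ∈ Finset.Icc 1 (K - 1), π c = 1)
    (hπpos : 0 < ∑ c ∈ Finset.Icc 1 (K - 1), (c : ℝ) * π c)
    (ℓ : Fin K → ℝ) (γ : ℝ) (hγ0 : 0 ≤ γ) (hγ1 : γ ≤ 1) :
    (∑ y, ℓ y * q y)
      = (∑ S ∈ Finset.univ.powerset.filter
          (fun S : Finset (Fin K) => 1 ≤ S.card ∧ S.card ≤ K - 1),
          ((1 - γ) * (∑ y, ℓ y)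
            - (((K : ℝ) - 1) / (∑ c ∈ Finset.Icc 1 (K - 1), (c : ℝ) * π c)) *
                ∑ y ∈ S, ℓ y) *
            (π S.card * (((K - 1).choose S.card : ℝ))⁻¹ * ∑ z ∈ Sᶜ, q z))
        + γ * (∑ y, ℓ y) * (∑ y, q y) := by
  set Q : ℝ := ∑ y, q y with hQ
  set L : ℝ := ∑ y, ℓ y with hL
  set D : ℝ := ∑ y, ℓ y * q y with hD
  set P : ℝ := ∑ c ∈ Finset.Icc 1 (K - 1), (c : ℝ) * π c with hP
  have hPne : P ≠ 0 := ne_of_gt hπpos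
  have hK1 : ((K : ℝ) - 1) ≠ 0 := by
    have : (2 : ℝ) ≤ (K : ℝ) := by exact_mod_cast hK
    linarith
  have hKcast : ((K - 1 : ℕ) : ℝ) = (K : ℝ) - 1 := by
    rw [Nat.cast_sub (by omega), Nat.cast_one]
  rw [decomp]
  have per : ∀ c ∈ Finset.Icc 1 (K - 1),
      (∑ S ∈ (Finset.univ : Finset (Fin K)).powersetCard c,
        ((1 - γ) * L - (((K : ℝ) - 1) / P) * ∑ y ∈ S, ℓ y) *
          (π S.card * (((K - 1).choose S.card : ℝ))⁻¹ * ∑ z ∈ Sᶜ, q z))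
      = π c * ((1 - γ) * (L * Q)) - ((c : ℝ) * π c) * ((L * Q - D) / P) := by
    intro c hc
    rw [Finset.mem_Icc] at hc
    have hCc : (((K - 1).choose c : ℕ) : ℝ) ≠ 0 :=
      Nat.cast_ne_zero.2 (Nat.choose_pos hc.2).ne'
    have hid : (((K : ℝ) - 1)) * (((K - 2).choose (c - 1) : ℕ) : ℝ)
        = (c : ℝ) * (((K - 1).choose c : ℕ) : ℝ) := by
      have h := Nat.add_one_mul_choose_eq (K - 2) (c - 1)
      have h1 : K - 2 + 1 = K - 1 := by omega
      have h2 : c - 1 + 1 = c := by omega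
      rw [h1, h2] at h
      have h' := congrArg (Nat.cast : ℕ → ℝ) h
      push_cast at h'
      rw [← hKcast]
      linarith [h']
    have step0 : ∀ S ∈ (Finset.univ : Finset (Fin K)).powersetCard c,
        ((1 - γ) * L - (((K : ℝ) - 1) / P) * ∑ y ∈ S, ℓ y) *
          (π S.card * (((K - 1).choose S.card : ℝ))⁻¹ * ∑ z ∈ Sᶜ, q z)
        = (π c * (((K - 1).choose c : ℕ) : ℝ)⁻¹) *
            ((1 - γ) * L * (∑ z ∈ Sᶜ, q z)
              - (((K : ℝ) - 1) / P) * ((∑ y ∈ S, ℓ y) * (∑ z ∈ Sᶜ, q z))) := by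
      intro S hS
      rw [(Finset.mem_powersetCard.1 hS).2]
      ring
    rw [Finset.sum_congr rfl step0, ← Finset.mul_sum, Finset.sum_sub_distrib,
      ← Finset.mul_sum, ← Finset.mul_sum, sumA, sumB c hc.1]
    rw [← hQ, ← hL, ← hD]
    have hDc : (((K - 2).choose (c - 1) : ℕ) : ℝ)
        = (c : ℝ) * (((K - 1).choose c : ℕ) : ℝ) / ((K : ℝ) - 1) := by
      field_simp
      linarith [hid]
    rw [hDc]
    field_simp
  rw [Finset.sum_congr rfl per, Finset.sum_sub_distrib, ← Finset.sum_mul, ← Finset.sum_mul,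
    hπsum, ← hP, one_mul]
  have hcanc : P * ((L * Q - D) / P) = L * Q - D := by field_simp
  rw [hcanc]
  ring
end
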